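/- Let A and B be unital C*-algebras, let A_sa and B_sa denote their selfadjoint parts partially ordered by the cones of positive elements, and let T : A_sa → B_sa be a real-linear bijection with T(1) = 1. Then the following are equivalent: (i) T is an isometry, i.e. ‖Tx‖ = ‖x‖ for all x ∈ A_sa; (ii) T is an order isomorphism, i.e. both T and T⁻¹ map positive elements to positive elements; (iii) T is a Jordan isomorphism, i.e. T(x∘y) = T(x)∘T(y) for all x, y ∈ A_sa, where x∘y = (xy + yx)/2 is the Jordan product. -/

import Mathlib

/-!
Kadison's theorem: for a unital real-linear bijection between the selfadjoint parts of
unital C*-algebras, being an isometry, an order isomorphism, and a Jordan isomorphism are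
all equivalent.  The proof of the hard direction (order isomorphism implies Jordan) goes
through an elementary proof of the Kadison–Schwarz inequality `(S a)^2 ≤ S (a^2)` for unital
positive maps, obtained from partitions of unity built from the continuous functional calculus
("tent functions") together with the operator inequality `(∑ λᵢ • pᵢ)^2 ≤ ∑ λᵢ^2 • pᵢ` for
positive `pᵢ` summing to `1`.
-/

open scoped BigOperators

noncomputable section KadisonAux

/-- Tent (hat) function at the origin with width 1. -/
private def tent (s : ℝ) : ℝ := max 0 (1 - |s|)

private lemma tent_nonneg (s : ℝ) : 0 ≤ tent s := le_max_left _ _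

private lemma tent_continuous : Continuous tent := by
  unfold tent; fun_prop

private lemma tent_eq_zero {s : ℝ} (h : 1 ≤ |s|) : tent s = 0 :=
  max_eq_left (by linarith)

private lemma abs_le_one_of_tent_ne_zero {s : ℝ} (h : tent s ≠ 0) : |s| ≤ 1 := by
  by_contra h'
  exact h (tent_eq_zero (by linarith [not_le.mp h']))

private lemma tent_le_one (s : ℝ) : tent s ≤ 1 :=
  max_le zero_le_one (by linarith [abs_nonneg s])

private lemma tent_of_nonneg {s : ℝ} (h0 : 0 ≤ s) (h1 : s ≤ 1) : tent s = 1 - s := by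
  unfold tent; rw [abs_of_nonneg h0]; exact max_eq_right (by linarith)

private lemma tent_of_nonpos {s : ℝ} (h0 : -1 ≤ s) (h1 : s ≤ 0) : tent s = 1 + s := by
  unfold tent
  rw [abs_of_nonpos h1, max_eq_right (by linarith)]
  ring

/-- The key local computation: a sum of tent functions against weights `g k` collapses to
an affine interpolation between the neighbouring grid points. -/
private lemma tent_sum (N : ℤ) (g : ℤ → ℝ) {s : ℝ} (h1 : -(N : ℝ) ≤ s) (h2 : s ≤ N) :
    ∑ k ∈ Finset.Icc (-N) N, g k * tent (s - k) =
      (1 - (s - ⌊s⌋)) * g ⌊s⌋ + (s - ⌊s⌋) * g (⌊s⌋ + 1) := by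
  set j := ⌊s⌋ with hj
  have hjs : (j : ℝ) ≤ s := Int.floor_le s
  have hsj : s < (j : ℝ) + 1 := Int.lt_floor_add_one s
  have hjN : j ≤ N := by
    have := Int.floor_le_floor h2
    simpa [hj] using this
  have hNj : -N ≤ j := Int.le_floor.mpr (by push_cast; exact h1)
  have hz : ∀ k : ℤ, k ≠ j → k ≠ j + 1 → g k * tent (s - k) = 0 := by
    intro k hk1 hk2
    have : 1 ≤ |s - (k : ℝ)| := by
      rcases lt_or_ge k j with h | h
      · have : (k : ℝ) ≤ (j : ℝ) - 1 := by exact_mod_cast Int.le_sub_one_of_lt h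
        rw [abs_of_nonneg (by linarith)]; linarith
      · have hk : j + 2 ≤ k := by omega
        have : (j : ℝ) + 2 ≤ (k : ℝ) := by exact_mod_cast hk
        rw [abs_of_nonpos (by linarith)]; linarith
    rw [tent_eq_zero this, mul_zero]
  rcases eq_or_lt_of_le hjN with hEq | hLt
  · -- `j = N`, so `s = N` and only the `j` term survives.
    have hsN : s = (j : ℝ) := le_antisymm (by rw [hEq]; exact_mod_cast h2) hjs
    have hsub : s - (j : ℝ) = 0 := by rw [hsN]; ring
    rw [Finset.sum_eq_single j
      (fun b hbmem hb => hz b hb (fun h => by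
        rw [h, Finset.mem_Icc] at hbmem; omega))
      (fun h => absurd (Finset.mem_Icc.mpr ⟨hNj, hjN⟩) h)]
    rw [hsub, tent_of_nonneg le_rfl zero_le_one]
    ring
  · -- `j < N`: exactly the terms `j` and `j + 1` survive.
    have hmem1 : j ∈ Finset.Icc (-N) N := Finset.mem_Icc.mpr ⟨hNj, hjN⟩
    have hmem2 : j + 1 ∈ Finset.Icc (-N) N := Finset.mem_Icc.mpr ⟨by omega, by omega⟩
    have hsplit :
        ∑ k ∈ Finset.Icc (-N) N, g k * tent (s - k) =
          g j * tent (s - j) + g (j + 1) * tent (s - (j + 1)) := by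
      rw [← Finset.sum_subset (Finset.insert_subset hmem1 (Finset.singleton_subset_iff.mpr hmem2))
        (fun k _ hk => hz k (fun h => hk (by simp [h])) (fun h => hk (by simp [h])))]
      rw [Finset.sum_insert (by simp), Finset.sum_singleton]
      norm_cast
    rw [hsplit]
    rw [tent_of_nonneg (by linarith) (by linarith),
      tent_of_nonpos (by linarith) (by linarith)]
    ring

private lemma sq_sum_smul_le {B : Type*} [CStarAlgebra B] [PartialOrder B] [StarOrderedRing B]
    {ι : Type*} (s : Finset ι) (p : ι → B) (lam : ι → ℝ)
    (hp : ∀ i ∈ s, 0 ≤ p i) (hsum : ∑ i ∈ s, p i = 1) :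
    (∑ i ∈ s, lam i • p i) ^ 2 ≤ ∑ i ∈ s, lam i ^ 2 • p i := by
  set m : B := ∑ i ∈ s, lam i • p i with hm
  have hmsa : IsSelfAdjoint m := by
    rw [hm, IsSelfAdjoint, star_sum]
    exact Finset.sum_congr rfl fun i hi => by
      rw [star_smul, star_trivial, (IsSelfAdjoint.of_nonneg (hp i hi)).star_eq]
  have hterm : ∀ i ∈ s, 0 ≤ (lam i • (1 : B) - m) * p i * (lam i • (1 : B) - m) := by
    intro i hi
    have hc : IsSelfAdjoint (lam i • (1 : B) - m) := by
      refine IsSelfAdjoint.sub ?_ hmsa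
      rw [IsSelfAdjoint, star_smul, star_trivial, star_one]
    simpa [hc.star_eq] using star_left_conjugate_nonneg (hp i hi) (lam i • (1 : B) - m)
  have hsum_nonneg : (0 : B) ≤ ∑ i ∈ s, (lam i • (1 : B) - m) * p i * (lam i • (1 : B) - m) :=
    Finset.sum_nonneg hterm
  have hexp : ∑ i ∈ s, (lam i • (1 : B) - m) * p i * (lam i • (1 : B) - m)
      = (∑ i ∈ s, lam i ^ 2 • p i) - m ^ 2 := by
    have h1 : ∀ i ∈ s, (lam i • (1 : B) - m) * p i * (lam i • (1 : B) - m)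
        = lam i ^ 2 • p i - lam i • (m * p i) - lam i • (p i * m) + m * p i * m := by
      intro i _
      simp only [sub_mul, mul_sub, smul_mul_assoc, mul_smul_comm, one_mul, mul_one,
        smul_smul, smul_sub, mul_assoc]
      rw [← pow_two]
      abel
    rw [Finset.sum_congr rfl h1]
    simp only [Finset.sum_add_distrib, Finset.sum_sub_distrib]
    have e1 : ∑ i ∈ s, lam i • (m * p i) = m * m := by
      simp_rw [← mul_smul_comm]
      rw [← Finset.mul_sum, ← hm]
    have e2 : ∑ i ∈ s, lam i • (p i * m) = m * m := by
      simp_rw [← smul_mul_assoc]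
      rw [← Finset.sum_mul, ← hm]
    have e3 : ∑ i ∈ s, m * p i * m = m * m := by
      simp_rw [mul_assoc]
      rw [← Finset.mul_sum, ← Finset.sum_mul, hsum, one_mul]
    rw [e1, e2, e3, pow_two]
    abel
  rw [hexp] at hsum_nonneg
  exact sub_nonneg.mp hsum_nonneg

private lemma cfc_partition {A : Type*} [CStarAlgebra A] [PartialOrder A] [StarOrderedRing A]
    (a : A) (ha : IsSelfAdjoint a) {ε : ℝ} (hε : 0 < ε) :
    ∃ (N : ℤ) (u : ℤ → A) (lam : ℤ → ℝ),
      (∀ k ∈ Finset.Icc (-N) N, 0 ≤ u k) ∧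
      (∑ k ∈ Finset.Icc (-N) N, u k = 1) ∧
      (∑ k ∈ Finset.Icc (-N) N, lam k • u k = a) ∧
      ‖a ^ 2 - ∑ k ∈ Finset.Icc (-N) N, lam k ^ 2 • u k‖ ≤ ε := by
  rcases subsingleton_or_nontrivial A with hA | hA
  · refine ⟨1, fun _ => 0, fun _ => 0, fun k _ => le_rfl, Subsingleton.elim _ _,
      Subsingleton.elim _ _, ?_⟩
    rw [Subsingleton.elim (a ^ 2 - _) (0 : A), norm_zero]
    exact hε.le
  have hnorm_nonneg : (0 : ℝ) ≤ ‖a‖ := norm_nonneg a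
  set δ : ℝ := min 1 (ε / (2 * ‖a‖ + 1)) with hδdef
  have hδpos : 0 < δ := lt_min one_pos (div_pos hε (by linarith))
  have hδ1 : δ ≤ 1 := min_le_left _ _
  have hδε : δ * (2 * ‖a‖ + δ) ≤ ε := by
    have h2 : δ ≤ ε / (2 * ‖a‖ + 1) := min_le_right _ _
    have h3 : δ * (2 * ‖a‖ + δ) ≤ δ * (2 * ‖a‖ + 1) := by nlinarith
    calc δ * (2 * ‖a‖ + δ) ≤ δ * (2 * ‖a‖ + 1) := h3
      _ ≤ (ε / (2 * ‖a‖ + 1)) * (2 * ‖a‖ + 1) := by nlinarith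
      _ = ε := by field_simp
  set N : ℤ := max 1 ⌈‖a‖ / δ⌉ with hNdef
  have hN : ‖a‖ ≤ (N : ℝ) * δ := by
    have h1 : (⌈‖a‖ / δ⌉ : ℝ) ≥ ‖a‖ / δ := Int.le_ceil _
    have h2 : ((⌈‖a‖ / δ⌉ : ℤ) : ℝ) ≤ (N : ℝ) := by exact_mod_cast le_max_right _ _
    have h3 : ‖a‖ / δ ≤ (N : ℝ) := le_trans h1 h2
    calc ‖a‖ = (‖a‖ / δ) * δ := by field_simp
      _ ≤ (N : ℝ) * δ := by nlinarith
  have hspec : ∀ t ∈ spectrum ℝ a, |t| ≤ ‖a‖ := fun t ht => by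
    simpa using spectrum.norm_le_norm_of_mem ht
  have hs : ∀ t ∈ spectrum ℝ a, -(N : ℝ) ≤ t / δ ∧ t / δ ≤ N := by
    intro t ht
    have h := abs_le.mp ((hspec t ht).trans hN)
    constructor
    · rw [neg_le, ← neg_div]; exact (div_le_iff₀ hδpos).mpr (by linarith)
    · exact (div_le_iff₀ hδpos).mpr h.2
  set f : ℤ → ℝ → ℝ := fun k t => tent (t / δ - k) with hfdef
  have hfc : ∀ k, Continuous (f k) := fun k => tent_continuous.comp (by fun_prop)
  -- pointwise identities on the spectrum
  have hpt1 : ∀ t ∈ spectrum ℝ a, ∑ k ∈ Finset.Icc (-N) N, f k t = 1 := by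
    intro t ht
    have h := tent_sum N (fun _ => (1 : ℝ)) (hs t ht).1 (hs t ht).2
    simp only [hfdef]
    simp only [one_mul] at h
    rw [h]; ring
  have hpt2 : ∀ t ∈ spectrum ℝ a, ∑ k ∈ Finset.Icc (-N) N, ((k : ℝ) * δ) * f k t = t := by
    intro t ht
    have h := tent_sum N (fun k => (k : ℝ) * δ) (hs t ht).1 (hs t ht).2
    simp only [hfdef]
    calc ∑ k ∈ Finset.Icc (-N) N, ((k : ℝ) * δ) * tent (t / δ - k)
        = ∑ k ∈ Finset.Icc (-N) N, (k : ℝ) * δ * tent (t / δ - k) := by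
          exact Finset.sum_congr rfl fun k _ => by ring
      _ = (1 - (t / δ - ⌊t / δ⌋)) * (↑⌊t / δ⌋ * δ) + (t / δ - ↑⌊t / δ⌋) * (↑(⌊t / δ⌋ + 1) * δ) := h
      _ = t := by push_cast; field_simp; ring
  -- the three cfc sums
  have hcont1 : ∀ k ∈ Finset.Icc (-N) N, ContinuousOn (f k) (spectrum ℝ a) :=
    fun k _ => (hfc k).continuousOn
  have hsum1 : ∑ k ∈ Finset.Icc (-N) N, cfc (f k) a = 1 := by
    rw [← cfc_sum f a _ hcont1]
    rw [← cfc_one (R := ℝ) a ha]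
    apply cfc_congr
    intro t ht
    rw [Finset.sum_apply]
    exact (hpt1 t ht).trans (by norm_num)
  have hsum2 : ∑ k ∈ Finset.Icc (-N) N, ((k : ℝ) * δ) • cfc (f k) a = a := by
    have step : ∀ k ∈ Finset.Icc (-N) N,
        ((k : ℝ) * δ) • cfc (f k) a = cfc (fun t => ((k : ℝ) * δ) * f k t) a := by
      intro k _
      rw [← cfc_smul ((k : ℝ) * δ) (f k) a ((hfc k).continuousOn)]
      simp [smul_eq_mul]
    rw [Finset.sum_congr rfl step,
      ← cfc_sum (fun (k : ℤ) (t : ℝ) => ((k : ℝ) * δ) * f k t) a _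
        (fun k _ => (continuous_const.mul (hfc k)).continuousOn)]
    conv_rhs => rw [← cfc_id ℝ a ha]
    apply cfc_congr
    intro t ht
    rw [Finset.sum_apply]
    exact (hpt2 t ht).trans rfl
  have hsum3 : ‖a ^ 2 - ∑ k ∈ Finset.Icc (-N) N, ((k : ℝ) * δ) ^ 2 • cfc (f k) a‖ ≤ ε := by
    have step : ∀ k ∈ Finset.Icc (-N) N,
        (((k : ℝ) * δ) ^ 2) • cfc (f k) a = cfc (fun t => ((k : ℝ) * δ) ^ 2 * f k t) a := by
      intro k _
      rw [← cfc_smul (((k : ℝ) * δ) ^ 2) (f k) a ((hfc k).continuousOn)]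
      simp [smul_eq_mul]
    have hsq : a ^ 2 = cfc (fun t : ℝ => t ^ 2) a := by
      conv_lhs => rw [← cfc_id ℝ a ha]
      exact (cfc_pow (id : ℝ → ℝ) 2 a).symm
    rw [Finset.sum_congr rfl step,
      ← cfc_sum (fun (k : ℤ) (t : ℝ) => ((k : ℝ) * δ) ^ 2 * f k t) a _
        (fun k _ => (continuous_const.mul (hfc k)).continuousOn),
      hsq,
      ← cfc_sub (fun t : ℝ => t ^ 2) _ a (by fun_prop)
        (by
          have : (∑ k ∈ Finset.Icc (-N) N, fun t : ℝ => ((k : ℝ) * δ) ^ 2 * f k t)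
              = fun t : ℝ => ∑ k ∈ Finset.Icc (-N) N, ((k : ℝ) * δ) ^ 2 * f k t := by
            ext t; rw [Finset.sum_apply]
          rw [this]
          exact (continuous_finset_sum _ fun k _ => continuous_const.mul (hfc k)).continuousOn)]
    apply norm_cfc_le hε.le
    intro t ht
    rw [Real.norm_eq_abs, Finset.sum_apply]
    have h1 := hpt1 t ht
    have key : t ^ 2 - ∑ k ∈ Finset.Icc (-N) N, ((k : ℝ) * δ) ^ 2 * f k t
        = ∑ k ∈ Finset.Icc (-N) N, (t ^ 2 - ((k : ℝ) * δ) ^ 2) * f k t := by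
      rw [eq_comm]
      simp only [sub_mul, Finset.sum_sub_distrib, ← Finset.mul_sum, h1, mul_one]
    rw [key]
    have hbound : ∀ k ∈ Finset.Icc (-N) N,
        |(t ^ 2 - ((k : ℝ) * δ) ^ 2) * f k t| ≤ δ * (2 * ‖a‖ + δ) * f k t := by
      intro k _
      rcases eq_or_ne (f k t) 0 with h0 | h0
      · rw [h0]; simp
      · have habs : |t / δ - k| ≤ 1 := abs_le_one_of_tent_ne_zero h0
        have htk : |t - k * δ| ≤ δ := by
          have h5 : |t / δ - k| * δ ≤ 1 * δ := by nlinarith [abs_nonneg (t / δ - (k : ℝ))]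
          calc |t - k * δ| = |(t / δ - k) * δ| := by
                rw [sub_mul, div_mul_cancel₀ _ hδpos.ne']
            _ = |t / δ - k| * |δ| := abs_mul _ _
            _ = |t / δ - k| * δ := by rw [abs_of_pos hδpos]
            _ ≤ δ := by linarith
        have htk2 : |t + k * δ| ≤ 2 * ‖a‖ + δ := by
          have h1' : |t| ≤ ‖a‖ := hspec t ht
          have h2' : |(k : ℝ) * δ| ≤ |t| + δ := by
            have h6 := abs_sub_abs_le_abs_sub ((k : ℝ) * δ) t
            rw [abs_sub_comm] at h6
            linarith
          calc |t + k * δ| ≤ |t| + |(k : ℝ) * δ| := abs_add_le _ _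
            _ ≤ 2 * ‖a‖ + δ := by linarith
        have hft : 0 ≤ f k t := tent_nonneg _
        have hft1 : f k t ≤ 1 := tent_le_one _
        rw [abs_mul, abs_of_nonneg hft]
        have h7 : |t ^ 2 - ((k : ℝ) * δ) ^ 2| ≤ δ * (2 * ‖a‖ + δ) := by
          have h8 : t ^ 2 - ((k : ℝ) * δ) ^ 2 = (t - k * δ) * (t + k * δ) := by ring
          rw [h8, abs_mul]
          have h3 : (0 : ℝ) ≤ |t - (k : ℝ) * δ| := abs_nonneg _
          have h4 : (0 : ℝ) ≤ |t + (k : ℝ) * δ| := abs_nonneg _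
          nlinarith
        nlinarith
    calc |∑ k ∈ Finset.Icc (-N) N, (t ^ 2 - ((k : ℝ) * δ) ^ 2) * f k t|
        ≤ ∑ k ∈ Finset.Icc (-N) N, |(t ^ 2 - ((k : ℝ) * δ) ^ 2) * f k t| :=
          Finset.abs_sum_le_sum_abs _ _
      _ ≤ ∑ k ∈ Finset.Icc (-N) N, δ * (2 * ‖a‖ + δ) * f k t := Finset.sum_le_sum hbound
      _ = δ * (2 * ‖a‖ + δ) * ∑ k ∈ Finset.Icc (-N) N, f k t := by rw [Finset.mul_sum]
      _ = δ * (2 * ‖a‖ + δ) := by rw [hpt1 t ht, mul_one]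
      _ ≤ ε := hδε
  exact ⟨N, fun k => cfc (f k) a, fun k => (k : ℝ) * δ,
    fun k _ => cfc_nonneg fun t _ => tent_nonneg _, hsum1, hsum2, hsum3⟩

section OrderNorm

variable {A : Type*} [CStarAlgebra A] [PartialOrder A] [StarOrderedRing A]

private lemma smul_one_isSelfAdjoint (t : ℝ) : IsSelfAdjoint (t • (1 : A)) := by
  rw [IsSelfAdjoint, star_smul, star_trivial, star_one]

private lemma smul_one_nonneg {r : ℝ} (hr : 0 ≤ r) : (0 : A) ≤ r • (1 : A) := by
  have h : r • (1 : A) = star (Real.sqrt r • (1 : A)) * (Real.sqrt r • (1 : A)) := by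
    rw [star_smul, star_trivial, star_one, smul_mul_smul_comm, one_mul,
      Real.mul_self_sqrt hr]
  rw [h]
  exact star_mul_self_nonneg _

private lemma nonneg_of_norm_smul_one_sub {x : A} (hx : IsSelfAdjoint x) {t : ℝ}
    (h : ‖t • (1 : A) - x‖ ≤ t) : 0 ≤ x := by
  set y := t • (1 : A) - x with hy
  have hysa : IsSelfAdjoint y := (smul_one_isSelfAdjoint t).sub hx
  have h1 : y ≤ ‖y‖ • (1 : A) := by
    have := hysa.le_algebraMap_norm_self
    rwa [Algebra.algebraMap_eq_smul_one] at this
  have h2 : t • (1 : A) - ‖y‖ • (1 : A) ≤ t • (1 : A) - y := sub_le_sub_left h1 _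
  have h3 : t • (1 : A) - y = x := by rw [hy]; abel
  have h4 : t • (1 : A) - ‖y‖ • (1 : A) = (t - ‖y‖) • (1 : A) := by rw [sub_smul]
  have h5 : (0 : A) ≤ (t - ‖y‖) • (1 : A) := smul_one_nonneg (by linarith)
  calc (0 : A) ≤ (t - ‖y‖) • (1 : A) := h5
    _ = t • (1 : A) - ‖y‖ • (1 : A) := h4.symm
    _ ≤ t • (1 : A) - y := h2
    _ = x := h3

private lemma norm_smul_one_sub_le [Nontrivial A] {x : A} (hx : 0 ≤ x) {t : ℝ}
    (hxt : ‖x‖ ≤ t) : ‖t • (1 : A) - x‖ ≤ t := by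
  have hx1 : x ≤ t • (1 : A) := by
    have h1 := IsSelfAdjoint.le_algebraMap_norm_self (a := x)
    rw [Algebra.algebraMap_eq_smul_one] at h1
    have h2 : ‖x‖ • (1 : A) ≤ t • (1 : A) := by
      have : (0 : A) ≤ (t - ‖x‖) • (1 : A) := smul_one_nonneg (by linarith)
      calc ‖x‖ • (1 : A) ≤ ‖x‖ • (1 : A) + (t - ‖x‖) • (1 : A) := le_add_of_nonneg_right this
        _ = t • (1 : A) := by rw [← add_smul]; ring_nf
    exact h1.trans h2
  have h0 : 0 ≤ t • (1 : A) - x := sub_nonneg.mpr hx1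
  have hle : t • (1 : A) - x ≤ t • (1 : A) := sub_le_self _ hx
  have := CStarAlgebra.norm_le_norm_of_nonneg_of_le h0 hle
  calc ‖t • (1 : A) - x‖ ≤ ‖t • (1 : A)‖ := this
    _ = |t| * ‖(1 : A)‖ := by rw [norm_smul, Real.norm_eq_abs]
    _ = t := by rw [norm_one, abs_of_nonneg ((norm_nonneg x).trans hxt), mul_one]

private lemma norm_le_of_smul_one_pm {x : A} (hx : IsSelfAdjoint x) {t : ℝ} (ht : 0 ≤ t)
    (h1 : 0 ≤ t • (1 : A) + x) (h2 : 0 ≤ t • (1 : A) - x) : ‖x‖ ≤ t := by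
  have hspec : ∀ s ∈ spectrum ℝ x, |s| ≤ t := by
    intro s hs
    have ha1 : s + t ∈ spectrum ℝ (x + algebraMap ℝ A t) := by
      rw [← spectrum.add_singleton_eq]
      exact Set.add_mem_add hs rfl
    have ha2 : t - s ∈ spectrum ℝ (algebraMap ℝ A t - x) := by
      rw [← spectrum.singleton_sub_eq]
      exact Set.sub_mem_sub rfl hs
    have hb1 : 0 ≤ s + t := by
      refine spectrum_nonneg_of_nonneg ?_ ha1
      rwa [Algebra.algebraMap_eq_smul_one, add_comm]
    have hb2 : 0 ≤ t - s := by
      refine spectrum_nonneg_of_nonneg ?_ ha2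
      rwa [Algebra.algebraMap_eq_smul_one]
    rw [abs_le]; constructor <;> linarith
  conv_lhs => rw [← cfc_id ℝ x hx]
  apply norm_cfc_le ht
  intro s hs
  rw [id_eq, Real.norm_eq_abs]
  exact hspec s hs

end OrderNorm

section Schwarz

variable {A : Type*} [CStarAlgebra A] [PartialOrder A] [StarOrderedRing A]
variable {B : Type*} [CStarAlgebra B] [PartialOrder B] [StarOrderedRing B]

private lemma isSelfAdjoint_finset_sum {ι : Type*} (s : Finset ι) (g : ι → A)
    (hg : ∀ i ∈ s, IsSelfAdjoint (g i)) : IsSelfAdjoint (∑ i ∈ s, g i) := by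
  rw [IsSelfAdjoint, star_sum]
  exact Finset.sum_congr rfl fun i hi => (hg i hi).star_eq

private lemma map_finset_sum_sa (S : A → B)
    (hadd : ∀ x y : A, IsSelfAdjoint x → IsSelfAdjoint y → S (x + y) = S x + S y)
    (hzero : S 0 = 0)
    {ι : Type*} (s : Finset ι) (g : ι → A) (hg : ∀ i ∈ s, IsSelfAdjoint (g i)) :
    S (∑ i ∈ s, g i) = ∑ i ∈ s, S (g i) := by
  classical
  induction s using Finset.cons_induction with
  | empty => simpa using hzero
  | cons a s ha ih =>
    rw [Finset.sum_cons, Finset.sum_cons,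
      hadd _ _ (hg a (Finset.mem_cons_self a s))
        (isSelfAdjoint_finset_sum _ _ fun i hi => hg i (Finset.mem_cons_of_mem hi)),
      ih fun i hi => hg i (Finset.mem_cons_of_mem hi)]

private lemma kadison_schwarz (S : A → B)
    (hsa : ∀ x : A, IsSelfAdjoint x → IsSelfAdjoint (S x))
    (hadd : ∀ x y : A, IsSelfAdjoint x → IsSelfAdjoint y → S (x + y) = S x + S y)
    (hsmul : ∀ (t : ℝ) (x : A), IsSelfAdjoint x → S (t • x) = t • S x)
    (hone : S 1 = 1)
    (hpos : ∀ x : A, IsSelfAdjoint x → 0 ≤ x → 0 ≤ S x)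
    {a : A} (ha : IsSelfAdjoint a) : (S a) ^ 2 ≤ S (a ^ 2) := by
  have hzero : S 0 = 0 := by
    simpa using hsmul 0 0 (IsSelfAdjoint.of_nonneg le_rfl)
  have hsub : ∀ x y : A, IsSelfAdjoint x → IsSelfAdjoint y → S (x - y) = S x - S y := by
    intro x y hx hy
    have h := hadd (x - y) y (hx.sub hy) hy
    rw [sub_add_cancel] at h
    exact eq_sub_of_add_eq h.symm
  suffices hsuff : ∀ ε : ℝ, 0 < ε → (S a) ^ 2 ≤ S (a ^ 2) + ε • 1 by
    have hcl : ∀ ε ∈ Set.Ioi (0 : ℝ), S (a ^ 2) + ε • 1 - S a ^ 2 ∈ {y : B | 0 ≤ y} :=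
      fun ε hε => by simpa using sub_nonneg.mpr (hsuff ε hε)
    have hcont : Continuous fun ε : ℝ => S (a ^ 2) + ε • (1 : B) - S a ^ 2 := by fun_prop
    have htend : Filter.Tendsto (fun ε : ℝ => S (a ^ 2) + ε • (1 : B) - S a ^ 2)
        (nhdsWithin 0 (Set.Ioi 0)) (nhds (S (a ^ 2) + (0 : ℝ) • 1 - S a ^ 2)) :=
      (hcont.tendsto 0).mono_left nhdsWithin_le_nhds
    have hmem := CStarAlgebra.isClosed_nonneg.mem_of_tendsto htend
      (eventually_nhdsWithin_of_forall hcl)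
    have : (0 : B) ≤ S (a ^ 2) - S a ^ 2 := by simpa using hmem
    exact sub_nonneg.mp this
  intro ε hε
  obtain ⟨N, u, lam, hu0, hsum1, hsuma, hnorm⟩ := cfc_partition a ha hε
  set s : Finset ℤ := Finset.Icc (-N) N with hs
  have husa : ∀ k ∈ s, IsSelfAdjoint (u k) := fun k hk => IsSelfAdjoint.of_nonneg (hu0 k hk)
  have hp : ∀ k ∈ s, 0 ≤ S (u k) := fun k hk => hpos _ (husa k hk) (hu0 k hk)
  have hpsum : ∑ k ∈ s, S (u k) = 1 := by
    rw [← map_finset_sum_sa S hadd hzero s u husa, hsum1, hone]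
  have hma : ∑ k ∈ s, lam k • S (u k) = S a := by
    calc ∑ k ∈ s, lam k • S (u k) = ∑ k ∈ s, S (lam k • u k) :=
          Finset.sum_congr rfl fun k hk => (hsmul (lam k) (u k) (husa k hk)).symm
      _ = S (∑ k ∈ s, lam k • u k) :=
          (map_finset_sum_sa S hadd hzero s _ fun k hk =>
            by rw [IsSelfAdjoint, star_smul, star_trivial, (husa k hk).star_eq]).symm
      _ = S a := by rw [hsuma]
  have key := sq_sum_smul_le s (fun k => S (u k)) lam hp hpsum
  rw [hma] at key
  have hSg : ∑ k ∈ s, lam k ^ 2 • S (u k) = S (∑ k ∈ s, lam k ^ 2 • u k) := by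
    calc ∑ k ∈ s, lam k ^ 2 • S (u k) = ∑ k ∈ s, S (lam k ^ 2 • u k) :=
          Finset.sum_congr rfl fun k hk => (hsmul (lam k ^ 2) (u k) (husa k hk)).symm
      _ = S (∑ k ∈ s, lam k ^ 2 • u k) :=
          (map_finset_sum_sa S hadd hzero s _ fun k hk =>
            by rw [IsSelfAdjoint, star_smul, star_trivial, (husa k hk).star_eq]).symm
  rw [hSg] at key
  refine key.trans ?_
  -- S (g) ≤ S (a ^ 2) + ε • 1
  set g : A := ∑ k ∈ s, lam k ^ 2 • u k with hg
  have hgsa : IsSelfAdjoint g :=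
    isSelfAdjoint_finset_sum s _ fun k hk =>
      by rw [IsSelfAdjoint, star_smul, star_trivial, (husa k hk).star_eq]
  have hle : g ≤ a ^ 2 + ε • 1 := by
    have hd : IsSelfAdjoint (g - a ^ 2) := hgsa.sub (ha.pow 2)
    have h1 : g - a ^ 2 ≤ ‖g - a ^ 2‖ • (1 : A) := by
      have := hd.le_algebraMap_norm_self
      rwa [Algebra.algebraMap_eq_smul_one] at this
    have h2 : ‖g - a ^ 2‖ ≤ ε := by rwa [norm_sub_rev] at hnorm
    have h3 : ‖g - a ^ 2‖ • (1 : A) ≤ ε • (1 : A) := by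
      have h4 : (0 : A) ≤ (ε - ‖g - a ^ 2‖) • (1 : A) := smul_one_nonneg (by linarith)
      calc ‖g - a ^ 2‖ • (1 : A) ≤ ‖g - a ^ 2‖ • (1 : A) + (ε - ‖g - a ^ 2‖) • (1 : A) :=
            le_add_of_nonneg_right h4
        _ = ε • (1 : A) := by rw [← add_smul]; ring_nf
    have h7 := h1.trans h3
    rw [sub_le_iff_le_add] at h7
    rwa [add_comm] at h7
  have hmono : S g ≤ S (a ^ 2 + ε • 1) := by
    have hd2 : IsSelfAdjoint (a ^ 2 + ε • 1 - g) :=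
      ((ha.pow 2).add (smul_one_isSelfAdjoint ε)).sub hgsa
    have h5 : 0 ≤ S (a ^ 2 + ε • 1 - g) := hpos _ hd2 (sub_nonneg.mpr hle)
    have h6 := hsub (a ^ 2 + ε • 1) g ((ha.pow 2).add (smul_one_isSelfAdjoint ε)) hgsa
    rw [h6] at h5
    exact sub_nonneg.mp h5
  refine hmono.trans ?_
  rw [hadd _ _ (ha.pow 2) (smul_one_isSelfAdjoint ε), hsmul ε 1 (IsSelfAdjoint.one A), hone]

end Schwarz


end KadisonAux

/-- For a unital real-linear bijection `T` between the selfadjoint parts of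
unital C*-algebras, the following are equivalent: `T` is an isometry; `T` is an order
isomorphism; `T` is a Jordan isomorphism. -/
theorem kadison_isometry_iff_order_iso_iff_jordan_iso
    {A B : Type*} [CStarAlgebra A] [PartialOrder A] [StarOrderedRing A]
    [CStarAlgebra B] [PartialOrder B] [StarOrderedRing B]
    (T : A → B)
    (hbij : Set.BijOn T {x : A | IsSelfAdjoint x} {y : B | IsSelfAdjoint y})
    (hadd : ∀ x y : A, IsSelfAdjoint x → IsSelfAdjoint y → T (x + y) = T x + T y)
    (hsmul : ∀ (t : ℝ) (x : A), IsSelfAdjoint x → T (t • x) = t • T x)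
    (hone : T 1 = 1) :
    ((∀ x : A, IsSelfAdjoint x → ‖T x‖ = ‖x‖) ↔
        (∀ x : A, IsSelfAdjoint x → (0 ≤ x ↔ 0 ≤ T x))) ∧
      ((∀ x : A, IsSelfAdjoint x → ‖T x‖ = ‖x‖) ↔
        (∀ x y : A, IsSelfAdjoint x → IsSelfAdjoint y →
          T ((2 : ℝ)⁻¹ • (x * y + y * x)) = (2 : ℝ)⁻¹ • (T x * T y + T y * T x))) := by
  -- trivial case
  rcases subsingleton_or_nontrivial B with hB | hB
  · have hA : Subsingleton A := by
      have h10 : T 1 = T 0 := Subsingleton.elim _ _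
      have h01 : (1 : A) = 0 :=
        hbij.injOn (Set.mem_setOf.mpr (IsSelfAdjoint.one A))
          (Set.mem_setOf.mpr (IsSelfAdjoint.of_nonneg le_rfl)) h10
      exact subsingleton_of_zero_eq_one h01.symm
    constructor
    · constructor
      · intro _ x hx
        constructor <;> intro _ <;> exact le_of_eq (Subsingleton.elim _ _)
      · intro _ x hx
        rw [Subsingleton.elim x 0, Subsingleton.elim (T 0) 0]
        simp
    · constructor
      · intro _ x y hx hy
        exact Subsingleton.elim _ _
      · intro _ x hx
        rw [Subsingleton.elim x 0, Subsingleton.elim (T 0) 0]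
        simp
  have hA : Nontrivial A := by
    rcases subsingleton_or_nontrivial A with hA | hA
    · exfalso
      obtain ⟨x1, _, hx1⟩ := hbij.surjOn (Set.mem_setOf.mpr (IsSelfAdjoint.one B))
      obtain ⟨x0, _, hx0⟩ := hbij.surjOn
        (Set.mem_setOf.mpr (IsSelfAdjoint.of_nonneg (le_refl (0 : B))))
      exact one_ne_zero (by rw [← hx1, Subsingleton.elim x1 x0, hx0])
    · exact hA
  -- basic consequences of the hypotheses
  have hsa' : ∀ x : A, IsSelfAdjoint x → IsSelfAdjoint (T x) := fun x hx => hbij.mapsTo hx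
  have hzero : T 0 = 0 := by
    simpa using hsmul 0 0 (IsSelfAdjoint.of_nonneg le_rfl)
  have hsub : ∀ x y : A, IsSelfAdjoint x → IsSelfAdjoint y → T (x - y) = T x - T y := by
    intro x y hx hy
    have h := hadd (x - y) y (hx.sub hy) hy
    rw [sub_add_cancel] at h
    exact eq_sub_of_add_eq h.symm
  have hsmul1 : ∀ t : ℝ, T (t • (1 : A)) = t • (1 : B) := fun t => by
    rw [hsmul t 1 (IsSelfAdjoint.one A), hone]
  -- ISO ↔ ORD
  have hIO : (∀ x : A, IsSelfAdjoint x → ‖T x‖ = ‖x‖) ↔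
      (∀ x : A, IsSelfAdjoint x → (0 ≤ x ↔ 0 ≤ T x)) := by
    constructor
    · intro hiso x hx
      have hTx : IsSelfAdjoint (T x) := hsa' x hx
      constructor
      · intro hx0
        have h2 : T (‖x‖ • (1 : A) - x) = ‖x‖ • (1 : B) - T x := by
          rw [hsub _ _ (smul_one_isSelfAdjoint ‖x‖) hx, hsmul1]
        refine nonneg_of_norm_smul_one_sub (t := ‖x‖) hTx ?_
        rw [← h2, hiso _ ((smul_one_isSelfAdjoint ‖x‖).sub hx)]
        exact norm_smul_one_sub_le hx0 le_rfl
      · intro hT0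
        have h2 : T (‖T x‖ • (1 : A) - x) = ‖T x‖ • (1 : B) - T x := by
          rw [hsub _ _ (smul_one_isSelfAdjoint ‖T x‖) hx, hsmul1]
        refine nonneg_of_norm_smul_one_sub (t := ‖T x‖) hx ?_
        rw [← hiso _ ((smul_one_isSelfAdjoint ‖T x‖).sub hx), h2]
        exact norm_smul_one_sub_le hT0 le_rfl
    · intro hord x hx
      have hTx : IsSelfAdjoint (T x) := hsa' x hx
      have hTadd : ∀ t : ℝ, T (t • (1 : A) + x) = t • (1 : B) + T x := fun t => by
        rw [hadd _ _ (smul_one_isSelfAdjoint t) hx, hsmul1]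
      have hTsub : ∀ t : ℝ, T (t • (1 : A) - x) = t • (1 : B) - T x := fun t => by
        rw [hsub _ _ (smul_one_isSelfAdjoint t) hx, hsmul1]
      have hpm : ∀ z : A, 0 ≤ ‖z‖ • (1 : A) + z ∧ 0 ≤ ‖z‖ • (1 : A) - z → True := fun _ _ => trivial
      apply le_antisymm
      · -- ‖T x‖ ≤ ‖x‖
        refine norm_le_of_smul_one_pm hTx (norm_nonneg x) ?_ ?_
        · rw [← hTadd]
          refine (hord _ ((smul_one_isSelfAdjoint ‖x‖).add hx)).mp ?_
          have := hx.neg_algebraMap_norm_le_self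
          rw [Algebra.algebraMap_eq_smul_one] at this
          calc (0 : A) = -(‖x‖ • 1) + ‖x‖ • (1 : A) := by abel
            _ ≤ x + ‖x‖ • 1 := add_le_add_left this _
            _ = ‖x‖ • (1 : A) + x := by abel
        · rw [← hTsub]
          refine (hord _ ((smul_one_isSelfAdjoint ‖x‖).sub hx)).mp ?_
          have := hx.le_algebraMap_norm_self
          rw [Algebra.algebraMap_eq_smul_one] at this
          exact sub_nonneg.mpr this
      · -- ‖x‖ ≤ ‖T x‖
        refine norm_le_of_smul_one_pm hx (norm_nonneg (T x)) ?_ ?_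
        · refine (hord _ ((smul_one_isSelfAdjoint ‖T x‖).add hx)).mpr ?_
          rw [hTadd]
          have := hTx.neg_algebraMap_norm_le_self
          rw [Algebra.algebraMap_eq_smul_one] at this
          calc (0 : B) = -(‖T x‖ • 1) + ‖T x‖ • (1 : B) := by abel
            _ ≤ T x + ‖T x‖ • 1 := add_le_add_left this _
            _ = ‖T x‖ • (1 : B) + T x := by abel
        · refine (hord _ ((smul_one_isSelfAdjoint ‖T x‖).sub hx)).mpr ?_
          rw [hTsub]
          have := hTx.le_algebraMap_norm_self
          rw [Algebra.algebraMap_eq_smul_one] at this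
          exact sub_nonneg.mpr this
  -- ORD ↔ JOR
  have hOJ : (∀ x : A, IsSelfAdjoint x → (0 ≤ x ↔ 0 ≤ T x)) ↔
      (∀ x y : A, IsSelfAdjoint x → IsSelfAdjoint y →
        T ((2 : ℝ)⁻¹ • (x * y + y * x)) = (2 : ℝ)⁻¹ • (T x * T y + T y * T x)) := by
    constructor
    · intro hord
      -- the inverse map
      classical
      set T' : B → A := fun y =>
        if h : IsSelfAdjoint y then (hbij.surjOn (Set.mem_setOf.mpr h)).choose else 0 with hT'def
      have hT'spec : ∀ y : B, (hy : IsSelfAdjoint y) →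
          IsSelfAdjoint (T' y) ∧ T (T' y) = y := by
        intro y hy
        have h := (hbij.surjOn (Set.mem_setOf.mpr hy)).choose_spec
        rw [hT'def]
        simp only [dif_pos hy]
        exact ⟨h.1, h.2⟩
      have hT'sa : ∀ y : B, IsSelfAdjoint y → IsSelfAdjoint (T' y) :=
        fun y hy => (hT'spec y hy).1
      have hTT' : ∀ y : B, IsSelfAdjoint y → T (T' y) = y := fun y hy => (hT'spec y hy).2
      have hinj : ∀ x₁ x₂ : A, IsSelfAdjoint x₁ → IsSelfAdjoint x₂ → T x₁ = T x₂ → x₁ = x₂ :=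
        fun x₁ x₂ h1 h2 h => hbij.injOn (Set.mem_setOf.mpr h1) (Set.mem_setOf.mpr h2) h
      have hT'T : ∀ x : A, IsSelfAdjoint x → T' (T x) = x := fun x hx =>
        hinj _ _ (hT'sa _ (hsa' x hx)) hx (hTT' (T x) (hsa' x hx))
      have hT'add : ∀ y z : B, IsSelfAdjoint y → IsSelfAdjoint z →
          T' (y + z) = T' y + T' z := by
        intro y z hy hz
        refine hinj _ _ (hT'sa _ (hy.add hz)) ((hT'sa y hy).add (hT'sa z hz)) ?_
        rw [hTT' _ (hy.add hz), hadd _ _ (hT'sa y hy) (hT'sa z hz), hTT' y hy, hTT' z hz]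
      have hT'smul : ∀ (t : ℝ) (y : B), IsSelfAdjoint y → T' (t • y) = t • T' y := by
        intro t y hy
        have hty : IsSelfAdjoint (t • y) := by
          rw [IsSelfAdjoint, star_smul, star_trivial, hy.star_eq]
        have htT'y : IsSelfAdjoint (t • T' y) := by
          rw [IsSelfAdjoint, star_smul, star_trivial, (hT'sa y hy).star_eq]
        refine hinj _ _ (hT'sa _ hty) htT'y ?_
        rw [hTT' _ hty, hsmul t _ (hT'sa y hy), hTT' y hy]
      have hT'one : T' 1 = 1 := by
        refine hinj _ _ (hT'sa _ (IsSelfAdjoint.one B)) (IsSelfAdjoint.one A) ?_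
        rw [hTT' _ (IsSelfAdjoint.one B), hone]
      have hT'pos : ∀ y : B, IsSelfAdjoint y → 0 ≤ y → 0 ≤ T' y := by
        intro y hy hy0
        refine (hord _ (hT'sa y hy)).mpr ?_
        rwa [hTT' y hy]
      have hTpos : ∀ x : A, IsSelfAdjoint x → 0 ≤ x → 0 ≤ T x :=
        fun x hx hx0 => (hord x hx).mp hx0
      have hmono : ∀ u v : A, IsSelfAdjoint u → IsSelfAdjoint v → u ≤ v → T u ≤ T v := by
        intro u v hu hv huv
        have h := hTpos (v - u) (hv.sub hu) (sub_nonneg.mpr huv)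
        rw [hsub v u hv hu] at h
        exact sub_nonneg.mp h
      -- squares are preserved
      have hsq : ∀ x : A, IsSelfAdjoint x → T (x ^ 2) = (T x) ^ 2 := by
        intro x hx
        have h1 : (T x) ^ 2 ≤ T (x ^ 2) :=
          kadison_schwarz T hsa' hadd hsmul hone hTpos hx
        have h2 : (T' (T x)) ^ 2 ≤ T' ((T x) ^ 2) :=
          kadison_schwarz T' hT'sa hT'add hT'smul hT'one hT'pos (hsa' x hx)
        rw [hT'T x hx] at h2
        have h3 : T (x ^ 2) ≤ T (T' ((T x) ^ 2)) :=
          hmono _ _ (hx.pow 2) (hT'sa _ ((hsa' x hx).pow 2)) h2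
        rw [hTT' _ ((hsa' x hx).pow 2)] at h3
        exact le_antisymm h3 h1
      intro x y hx hy
      have hxy : IsSelfAdjoint (x * y + y * x) := by
        rw [IsSelfAdjoint, star_add, star_mul, star_mul, hx.star_eq, hy.star_eq, add_comm]
      rw [hsmul _ _ hxy]
      congr 1
      have hiden : x * y + y * x = (x + y) ^ 2 - x ^ 2 - y ^ 2 := by noncomm_ring
      have h4 : T (x * y + y * x) = T ((x + y) ^ 2) - T (x ^ 2) - T (y ^ 2) := by
        rw [hiden, hsub _ _ (((hx.add hy).pow 2).sub (hx.pow 2)) (hy.pow 2),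
          hsub _ _ ((hx.add hy).pow 2) (hx.pow 2)]
      rw [h4, hsq _ (hx.add hy), hsq _ hx, hsq _ hy, hadd _ _ hx hy]
      noncomm_ring
    · intro hjor x hx
      have hsqT : ∀ z : A, IsSelfAdjoint z → T (z * z) = T z * T z := by
        intro z hz
        have h := hjor z z hz hz
        have e1 : (2 : ℝ)⁻¹ • (z * z + z * z) = z * z := by
          rw [← two_smul ℝ (z * z), smul_smul]
          norm_num
        have e2 : (2 : ℝ)⁻¹ • (T z * T z + T z * T z) = T z * T z := by
          rw [← two_smul ℝ (T z * T z), smul_smul]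
          norm_num
        rwa [e1, e2] at h
      constructor
      · intro hx0
        set r : A := cfc (fun s : ℝ => Real.sqrt s) x with hr
        have hrsa : IsSelfAdjoint r := cfc_predicate _ x
        have hr2 : r * r = x := by
          have h1 : r * r = r ^ 2 := (pow_two r).symm
          rw [h1, hr, ← cfc_pow (fun s : ℝ => Real.sqrt s) 2 x]
          conv_rhs => rw [← cfc_id ℝ x hx]
          apply cfc_congr
          intro s hs
          exact Real.sq_sqrt (spectrum_nonneg_of_nonneg hx0 hs)
        have h5 : T x = T r * T r := by rw [← hr2, hsqT r hrsa]
        rw [h5]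
        have h8 := star_mul_self_nonneg (T r)
        rwa [(hsa' r hrsa).star_eq] at h8
      · intro hT0
        set c : B := cfc (fun s : ℝ => Real.sqrt s) (T x) with hc
        have hcsa : IsSelfAdjoint c := cfc_predicate _ (T x)
        have hc2 : c * c = T x := by
          have h1 : c * c = c ^ 2 := (pow_two c).symm
          rw [h1, hc, ← cfc_pow (fun s : ℝ => Real.sqrt s) 2 (T x)]
          conv_rhs => rw [← cfc_id ℝ (T x) (hsa' x hx)]
          apply cfc_congr
          intro s hs
          exact Real.sq_sqrt (spectrum_nonneg_of_nonneg hT0 hs)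
        obtain ⟨d, hdmem, hTd⟩ := hbij.surjOn (Set.mem_setOf.mpr hcsa)
        have hd : IsSelfAdjoint d := hdmem
        have hdd : IsSelfAdjoint (d * d) := by
          rw [IsSelfAdjoint, star_mul, hd.star_eq]
        have h6 : T (d * d) = T x := by rw [hsqT d hd, hTd, hc2]
        have h7 : d * d = x :=
          hbij.injOn (Set.mem_setOf.mpr hdd) (Set.mem_setOf.mpr hx) h6
        rw [← h7]
        have h8 := star_mul_self_nonneg d
        rwa [hd.star_eq] at h8
  exact ⟨hIO, hIO.trans hOJ⟩
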